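/- Let G be a d-regular graph with d ≥ 10^8. Then there exists a subset V0 ⊆ V(G) such that every vertex v of G satisfies |d_{V0}(v) − 0.05·d| ≤ 3·10^{−4}·d, where d_{V0}(v) is the number of neighbors of v in V0. -/

import Mathlib

set_option maxRecDepth 8000
set_option maxHeartbeats 1000000

open scoped Classical
open Finset

/-- Intersection with a fixed (classical) decidability instance, to make statements
instance-independent. -/
noncomputable def interC {Ω : Type*} (s t : Finset Ω) : Finset Ω :=
  @Inter.inter _ (@Finset.instInter _ (Classical.decEq Ω)) s t

lemma mem_interC {Ω : Type*} {a : Ω} {s t : Finset Ω} : a ∈ interC s t ↔ a ∈ s ∧ a ∈ t :=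
  Finset.mem_inter

lemma interC_eq {Ω : Type*} [DecidableEq Ω] (s t : Finset Ω) : interC s t = s ∩ t := by
  ext a
  rw [mem_interC, Finset.mem_inter]

section LLL
variable {Ω I : Type*} [Fintype Ω] [Nonempty Ω] [Fintype I] [DecidableEq I]

/-- The set of outcomes avoiding all events indexed by `S`. -/
noncomputable def Blk (A : I → Finset Ω) (S : Finset I) : Finset Ω :=
  univ.filter (fun ω => ∀ j ∈ S, ω ∉ A j)

lemma Blk_empty (A : I → Finset Ω) : Blk A ∅ = univ := by
  simp [Blk]

lemma Blk_insert (A : I → Finset Ω) (j : I) (S : Finset I) :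
    Blk A (insert j S) = Blk A S \ A j := by
  ext ω
  simp only [Blk, mem_filter, mem_univ, true_and, mem_sdiff, mem_insert]
  constructor
  · intro h
    exact ⟨fun k hk => h k (Or.inr hk), h j (Or.inl rfl)⟩
  · rintro ⟨h1, h2⟩ k (rfl | hk)
    · exact h2
    · exact h1 k hk

lemma Blk_mono (A : I → Finset Ω) {S T : Finset I} (h : S ⊆ T) :
    Blk A T ⊆ Blk A S := by
  intro ω hω
  simp only [Blk, mem_filter, mem_univ, true_and] at hω ⊢
  exact fun j hj => hω j (h hj)

lemma card_Blk_insert (A : I → Finset Ω) (j : I) (S : Finset I) :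
    ((Blk A (insert j S)).card : ℝ) = (Blk A S).card - (A j ∩ (Blk A S)).card := by
  rw [Blk_insert]
  have h := Finset.card_sdiff_add_card_inter (Blk A S) (A j)
  have h2 : Blk A S ∩ A j = A j ∩ Blk A S := Finset.inter_comm _ _
  rw [h2] at h
  have : ((Blk A S \ A j).card : ℝ) + (A j ∩ Blk A S).card = (Blk A S).card := by
    exact_mod_cast congrArg (Nat.cast : ℕ → ℝ) h
  linarith

theorem lll_counting (A : I → Finset Ω) (Γ : I → Finset I) (D : ℕ) (p q : ℝ)
    (hq0 : 0 < q) (hq1 : q < 1)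
    (hp : ∀ i, ((A i).card : ℝ) ≤ p * (Fintype.card Ω))
    (hpq : p ≤ q * (1 - q) ^ D)
    (hΓ : ∀ i, (Γ i).card ≤ D)
    (hind : ∀ i, ∀ S : Finset I, (∀ j ∈ S, j ∉ Γ i) →
      (((interC (A i) (Blk A S)).card : ℝ)) * (Fintype.card Ω) = (A i).card * (Blk A S).card) :
    ∃ ω : Ω, ∀ i, ω ∉ A i := by
  have hind' : ∀ i, ∀ S : Finset I, (∀ j ∈ S, j ∉ Γ i) →
      ((A i ∩ Blk A S).card : ℝ) * (Fintype.card Ω) = (A i).card * (Blk A S).card := by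
    intro i S h
    rw [← interC_eq]
    exact hind i S h
  have hq1' : (0:ℝ) ≤ 1 - q := by linarith
  have hqle1 : (1 - q : ℝ) ≤ 1 := by linarith
  have hΩ : (0:ℝ) < Fintype.card Ω := by
    exact_mod_cast Fintype.card_pos
  have hpq' : p ≤ q := le_trans hpq (by
    calc q * (1-q)^D ≤ q * 1 := by
          exact mul_le_mul_of_nonneg_left (pow_le_one₀ hq1' hqle1) (le_of_lt hq0)
      _ = q := mul_one q)
  have key : ∀ n (S : Finset I), S.card ≤ n →
      (0:ℝ) < (Blk A S).card ∧
      ∀ i ∉ S, ((A i ∩ Blk A S).card : ℝ) ≤ q * (Blk A S).card := by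
    intro n
    induction n with
    | zero =>
      intro S hS
      have hSe : S = ∅ := Finset.card_eq_zero.mp (Nat.le_zero.mp hS)
      subst hSe
      rw [Blk_empty]
      constructor
      · simpa using hΩ
      · intro i _
        have : (A i ∩ univ) = A i := Finset.inter_univ _
        rw [this]
        calc ((A i).card : ℝ) ≤ p * Fintype.card Ω := hp i
          _ ≤ q * Fintype.card Ω := mul_le_mul_of_nonneg_right hpq' (le_of_lt hΩ)
          _ = q * (univ : Finset Ω).card := by rw [Finset.card_univ]
    | succ n ih =>
      intro S hS
      by_cases hc : S.card ≤ n
      · exact ih S hc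
      have hcard : S.card = n + 1 := le_antisymm hS (Nat.succ_le_of_lt (not_le.mp hc))
      -- positivity
      have hpos : (0:ℝ) < (Blk A S).card := by
        have hne : S.Nonempty := Finset.card_pos.mp (by omega)
        obtain ⟨j, hj⟩ := hne
        have hS' : (S.erase j).card ≤ n := by
          rw [Finset.card_erase_of_mem hj, hcard]; omega
        obtain ⟨hpos', hcond'⟩ := ih (S.erase j) hS'
        have hins : insert j (S.erase j) = S := Finset.insert_erase hj
        have := card_Blk_insert A j (S.erase j)
        rw [hins] at this
        have hAj := hcond' j (Finset.notMem_erase j S)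
        rw [this]
        nlinarith
      refine ⟨hpos, ?_⟩
      intro i hi
      set S2 := S \ Γ i with hS2
      set S1 := S ∩ Γ i with hS1
      have hunion : S2 ∪ S1 = S := Finset.sdiff_union_inter S (Γ i)
      -- peeling claim
      have claim : ∀ T : Finset I, T ⊆ S1 →
          (1 - q) ^ T.card * ((Blk A S2).card : ℝ) ≤ (Blk A (S2 ∪ T)).card := by
        intro T
        induction T using Finset.induction_on with
        | empty => intro _; simp
        | @insert j T hjT ihT =>
          intro hsub
          have hTsub : T ⊆ S1 := fun x hx => hsub (Finset.mem_insert_of_mem hx)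
          have hjS1 : j ∈ S1 := hsub (Finset.mem_insert_self j T)
          have hjS : j ∈ S := (Finset.mem_inter.mp hjS1).1
          have hjΓ : j ∈ Γ i := (Finset.mem_inter.mp hjS1).2
          have hjS2 : j ∉ S2 := by
            simp only [hS2, Finset.mem_sdiff]
            tauto
          have hjR : j ∉ S2 ∪ T := by
            simp only [Finset.mem_union]
            tauto
          have hRsub : S2 ∪ T ⊆ S.erase j := by
            intro x hx
            rw [Finset.mem_erase]
            refine ⟨fun hxj => hjR (hxj ▸ hx), ?_⟩
            rcases Finset.mem_union.mp hx with h | h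
            · exact (Finset.mem_sdiff.mp h).1
            · exact (Finset.mem_inter.mp (hTsub h)).1
          have hRcard : (S2 ∪ T).card ≤ n := by
            calc (S2 ∪ T).card ≤ (S.erase j).card := Finset.card_le_card hRsub
              _ = n := by rw [Finset.card_erase_of_mem hjS, hcard]; omega
          obtain ⟨hposR, hcondR⟩ := ih (S2 ∪ T) hRcard
          have heq : S2 ∪ insert j T = insert j (S2 ∪ T) := by
            ext x
            simp only [Finset.mem_union, Finset.mem_insert]
            tauto
          have hcardBlk := card_Blk_insert A j (S2 ∪ T)
          have hAj := hcondR j hjR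
          have hTc : (insert j T).card = T.card + 1 := Finset.card_insert_of_notMem hjT
          rw [heq, hcardBlk, hTc]
          have h1 : (1 - q) ^ (T.card + 1) * ((Blk A S2).card : ℝ)
              = (1 - q) * ((1 - q) ^ T.card * ((Blk A S2).card : ℝ)) := by ring
          rw [h1]
          have h2 : (1 - q) * ((1 - q) ^ T.card * ((Blk A S2).card : ℝ))
              ≤ (1 - q) * ((Blk A (S2 ∪ T)).card : ℝ) :=
            mul_le_mul_of_nonneg_left (ihT hTsub) hq1'
          nlinarith
      have hfar : ∀ j ∈ S2, j ∉ Γ i := by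
        intro j hj
        exact (Finset.mem_sdiff.mp hj).2
      have hindS2 := hind' i S2 hfar
      have hS1card : S1.card ≤ D := le_trans (Finset.card_le_card (Finset.inter_subset_right)) (hΓ i)
      have hBlkS2pos : (0:ℝ) ≤ ((Blk A S2).card : ℝ) := Nat.cast_nonneg _
      -- card (A i ∩ Blk S) ≤ card (A i ∩ Blk S2)
      have hmono : ((A i ∩ Blk A S).card : ℝ) ≤ (A i ∩ Blk A S2).card := by
        have : A i ∩ Blk A S ⊆ A i ∩ Blk A S2 := by
          apply Finset.inter_subset_inter (le_refl _)
          exact Blk_mono A (by rw [hS2]; exact Finset.sdiff_subset)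
        exact_mod_cast Finset.card_le_card this
      have hstep1 : ((A i ∩ Blk A S2).card : ℝ) ≤ p * (Blk A S2).card := by
        have h := hindS2
        have hA := hp i
        nlinarith [hBlkS2pos, hΩ]
      have hstep2 : p * ((Blk A S2).card : ℝ) ≤ q * ((1-q)^S1.card * (Blk A S2).card) := by
        have hpow : (1-q)^D ≤ (1-q)^S1.card := pow_le_pow_of_le_one hq1' hqle1 hS1card
        have : p ≤ q * (1-q)^S1.card := le_trans hpq
          (mul_le_mul_of_nonneg_left hpow (le_of_lt hq0))
        nlinarith
      have hstep3 : (1-q)^S1.card * ((Blk A S2).card : ℝ) ≤ (Blk A S).card := by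
        have := claim S1 (le_refl _)
        rwa [hunion] at this
      calc ((A i ∩ Blk A S).card : ℝ) ≤ (A i ∩ Blk A S2).card := hmono
        _ ≤ p * (Blk A S2).card := hstep1
        _ ≤ q * ((1-q)^S1.card * (Blk A S2).card) := hstep2
        _ ≤ q * (Blk A S).card := mul_le_mul_of_nonneg_left hstep3 (le_of_lt hq0)
  obtain ⟨hpos, -⟩ := key (Fintype.card I) univ (by rw [Finset.card_univ])
  have : (Blk A univ).Nonempty := Finset.card_pos.mp (by exact_mod_cast hpos)
  obtain ⟨ω, hω⟩ := this
  simp only [Blk, mem_filter] at hω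
  exact ⟨ω, fun i => hω.2 i (Finset.mem_univ i)⟩

end LLL


section Cylinder
variable {V : Type*} [Fintype V]

lemma cylinder_count (s : Finset V) (P Q : (V → Fin 20) → Prop)
    (hP : ∀ f g : V → Fin 20, (∀ x ∈ s, f x = g x) → (P f ↔ P g))
    (hQ : ∀ f g : V → Fin 20, (∀ x ∉ s, f x = g x) → (Q f ↔ Q g)) :
    ((univ.filter (fun f => P f ∧ Q f)).card) * (Fintype.card (V → Fin 20)) =
      (univ.filter P).card * (univ.filter Q).card := by
  set A := ({x : V // x ∈ s} → Fin 20)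
  set B := ({x : V // ¬ x ∈ s} → Fin 20)
  let e : (V → Fin 20) ≃ A × B := Equiv.piEquivPiSubtypeProd (fun x => x ∈ s) (fun _ => Fin 20)
  let PA : A → Prop := fun a => P (e.symm (a, fun _ => 0))
  let QB : B → Prop := fun b => Q (e.symm ((fun _ => 0), b))
  have hsymm1 : ∀ (a : A) (b : B) (x : V) (hx : x ∈ s), e.symm (a, b) x = a ⟨x, hx⟩ := by
    intro a b x hx
    simp [e, Equiv.piEquivPiSubtypeProd, dif_pos hx]
  have hsymm2 : ∀ (a : A) (b : B) (x : V) (hx : ¬ x ∈ s), e.symm (a, b) x = b ⟨x, hx⟩ := by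
    intro a b x hx
    simp [e, Equiv.piEquivPiSubtypeProd, dif_neg hx]
  have happ1 : ∀ (f : V → Fin 20) (x : V) (hx : x ∈ s), (e f).1 ⟨x, hx⟩ = f x := by
    intro f x hx; simp [e, Equiv.piEquivPiSubtypeProd]
  have happ2 : ∀ (f : V → Fin 20) (x : V) (hx : ¬ x ∈ s), (e f).2 ⟨x, hx⟩ = f x := by
    intro f x hx; simp [e, Equiv.piEquivPiSubtypeProd]
  have hPA : ∀ f : V → Fin 20, P f ↔ PA (e f).1 := by
    intro f
    apply hP
    intro x hx
    rw [hsymm1 _ _ x hx, happ1 f x hx]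
  have hQB : ∀ f : V → Fin 20, Q f ↔ QB (e f).2 := by
    intro f
    apply hQ
    intro x hx
    rw [hsymm2 _ _ x hx, happ2 f x hx]
  have c1 : (univ.filter (fun f => P f ∧ Q f)).card
      = Fintype.card {a // PA a} * Fintype.card {b // QB b} := by
    rw [← Fintype.card_subtype]
    rw [← Fintype.card_prod]
    apply Fintype.card_congr
    exact (Equiv.subtypeEquiv e (by
      intro f
      rw [hPA f, hQB f])).trans Equiv.subtypeProdEquivProd
  have c2 : (univ.filter P).card = Fintype.card {a // PA a} * Fintype.card B := by
    rw [← Fintype.card_subtype, ← Fintype.card_prod]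
    apply Fintype.card_congr
    refine (Equiv.subtypeEquiv e (by
      intro f
      rw [hPA f]
      exact Iff.intro (fun h => ⟨h, trivial⟩) (fun h => h.1))).trans
      ((Equiv.subtypeProdEquivProd (p := PA) (q := fun _ => True)).trans ?_)
    exact Equiv.prodCongr (Equiv.refl _) (Equiv.subtypeUnivEquiv (fun _ => trivial))
  have c3 : (univ.filter Q).card = Fintype.card A * Fintype.card {b // QB b} := by
    rw [← Fintype.card_subtype, ← Fintype.card_prod]
    apply Fintype.card_congr
    refine (Equiv.subtypeEquiv e (by
      intro f
      rw [hQB f]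
      exact Iff.intro (fun h => ⟨trivial, h⟩) (fun h => h.2))).trans
      ((Equiv.subtypeProdEquivProd (p := fun _ => True) (q := QB)).trans ?_)
    exact Equiv.prodCongr (Equiv.subtypeUnivEquiv (fun _ => trivial)) (Equiv.refl _)
  have c4 : Fintype.card (V → Fin 20) = Fintype.card A * Fintype.card B := by
    rw [← Fintype.card_prod]
    exact Fintype.card_congr e
  rw [c1, c2, c3, c4]
  ring

lemma cylinder_count' (s : Finset V) (P Q : (V → Fin 20) → Prop)
    (hP : ∀ f g : V → Fin 20, (∀ x ∈ s, f x = g x) → (P f ↔ P g))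
    (hQ : ∀ f g : V → Fin 20, (∀ x ∉ s, f x = g x) → (Q f ↔ Q g))
    (E1 E2 E3 : Finset (V → Fin 20))
    (hE1 : ∀ f, f ∈ E1 ↔ P f ∧ Q f) (hE2 : ∀ f, f ∈ E2 ↔ P f) (hE3 : ∀ f, f ∈ E3 ↔ Q f) :
    E1.card * (Fintype.card (V → Fin 20)) = E2.card * E3.card := by
  have h1 : E1 = univ.filter (fun f => P f ∧ Q f) := by
    ext f; rw [hE1 f, Finset.mem_filter]; simp
  have h2 : E2 = univ.filter P := by
    ext f; rw [hE2 f, Finset.mem_filter]; simp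
  have h3 : E3 = univ.filter Q := by
    ext f; rw [hE3 f, Finset.mem_filter]; simp
  rw [h1, h2, h3]
  exact cylinder_count s P Q hP hQ
end Cylinder


lemma R1 : ((200063:ℝ)/200000 * (100000088/10^8))^10000 ≤ ((10063:ℝ)/10^4)^503 := by
  rw [div_mul_div_comm, div_pow, div_pow, div_le_div_iff₀ (by positivity) (by positivity)]
  norm_num
  have h : (20006317605544:ℕ) ^ 10000 * 10000 ^ 503 ≤ 10063 ^ 503 * 20000000000000 ^ 10000 := by
    decide +kernel
  exact_mod_cast h

lemma R2 : ((199937:ℝ)/200000 * (100000088/10^8))^10000 ≤ ((9937:ℝ)/10^4)^497 := by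
  rw [div_mul_div_comm, div_pow, div_pow, div_le_div_iff₀ (by positivity) (by positivity)]
  norm_num
  have h : (19993717594456:ℕ) ^ 10000 * 10000 ^ 497 ≤ 9937 ^ 497 * 20000000000000 ^ 10000 := by
    decide +kernel
  exact_mod_cast h

section Chernoff
variable {V : Type*} [Fintype V]

/-- moment generating function identity -/
lemma mgf_identity (s : Finset V) (lam : ℝ) :
    ∑ f : V → Fin 20, lam ^ ((s.filter (fun u => f u = 0)).card)
      = (19 + lam) ^ s.card * 20 ^ (Fintype.card V - s.card) := by
  have h1 : ∀ f : V → Fin 20, lam ^ ((s.filter (fun u => f u = 0)).card)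
      = ∏ u : V, (if u ∈ s ∧ f u = 0 then lam else 1) := by
    intro f
    rw [Finset.prod_ite, Finset.prod_const, Finset.prod_const, one_pow, mul_one]
    congr 2
    ext u
    simp
  simp_rw [h1]
  rw [← Fintype.prod_sum (fun u (x : Fin 20) => if u ∈ s ∧ x = 0 then lam else 1)]
  have h2 : ∀ u : V, (∑ x : Fin 20, (if u ∈ s ∧ x = 0 then lam else 1))
      = if u ∈ s then 19 + lam else 20 := by
    intro u
    by_cases hu : u ∈ s
    · simp only [hu, true_and, if_true]
      rw [Finset.sum_ite, Finset.sum_const, Finset.sum_const]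
      have hc1 : (univ.filter (fun x : Fin 20 => x = 0)).card = 1 := by
        rw [Finset.filter_eq']
        simp
      have hc2 : (univ.filter (fun x : Fin 20 => ¬ x = 0)).card = 19 := by
        have h := Finset.card_filter_add_card_filter_not
          (s := (univ : Finset (Fin 20))) (p := fun x : Fin 20 => x = 0)
        simp only [Finset.card_univ, Fintype.card_fin] at h
        omega
      rw [hc1, hc2]
      simp
      ring
    · simp [hu]
  rw [Finset.prod_congr rfl (fun u _ => h2 u)]
  rw [Finset.prod_ite, Finset.prod_const, Finset.prod_const]
  have hf1 : (univ.filter (fun u : V => u ∈ s)) = s := by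
    ext u; simp
  have hf2 : (univ.filter (fun u : V => ¬ u ∈ s)).card = Fintype.card V - s.card := by
    have h := Finset.card_filter_add_card_filter_not
      (s := (univ : Finset V)) (p := fun u : V => u ∈ s)
    rw [Finset.card_univ] at h
    rw [hf1] at h
    omega
  rw [hf1, hf2]

lemma tail_upper (s : Finset V) (m : ℕ) (lam : ℝ) (hlam : 1 ≤ lam)
    (T : Finset (V → Fin 20))
    (hT : ∀ f ∈ T, m ≤ (s.filter (fun u => f u = 0)).card) :
    (T.card : ℝ) * lam ^ m ≤ (19 + lam) ^ s.card * 20 ^ (Fintype.card V - s.card) := by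
  have hlam0 : (0:ℝ) ≤ lam := le_trans zero_le_one hlam
  calc (T.card : ℝ) * lam ^ m = ∑ _f ∈ T, lam ^ m := by
        rw [Finset.sum_const, nsmul_eq_mul]
    _ ≤ ∑ f ∈ T, lam ^ ((s.filter (fun u => f u = 0)).card) :=
        Finset.sum_le_sum (fun f hf => pow_le_pow_right₀ hlam (hT f hf))
    _ ≤ ∑ f : V → Fin 20, lam ^ ((s.filter (fun u => f u = 0)).card) :=
        Finset.sum_le_sum_of_subset_of_nonneg (Finset.subset_univ T)
          (fun f _ _ => pow_nonneg hlam0 _)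
    _ = _ := mgf_identity s lam

lemma tail_lower (s : Finset V) (m : ℕ) (lam : ℝ) (hlam0 : 0 < lam) (hlam : lam ≤ 1)
    (T : Finset (V → Fin 20))
    (hT : ∀ f ∈ T, (s.filter (fun u => f u = 0)).card ≤ m) :
    (T.card : ℝ) * lam ^ m ≤ (19 + lam) ^ s.card * 20 ^ (Fintype.card V - s.card) := by
  calc (T.card : ℝ) * lam ^ m = ∑ _f ∈ T, lam ^ m := by
        rw [Finset.sum_const, nsmul_eq_mul]
    _ ≤ ∑ f ∈ T, lam ^ ((s.filter (fun u => f u = 0)).card) :=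
        Finset.sum_le_sum (fun f hf =>
          pow_le_pow_of_le_one (le_of_lt hlam0) hlam (hT f hf))
    _ ≤ ∑ f : V → Fin 20, lam ^ ((s.filter (fun u => f u = 0)).card) :=
        Finset.sum_le_sum_of_subset_of_nonneg (Finset.subset_univ T)
          (fun f _ _ => pow_nonneg (le_of_lt hlam0) _)
    _ = _ := mgf_identity s lam

/-- Main per-vertex counting bound. -/
lemma vertex_bound (s : Finset V) (d : ℕ) (hs : s.card = d) :
    ((univ.filter (fun f : V → Fin 20 =>
        ¬ |((s.filter (fun u => f u = 0)).card : ℝ) - 0.05 * d| ≤ 3 * 10 ^ (-4 : ℤ) * d)).card : ℝ)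
      * ((100000088:ℝ)/10^8)^d ≤ 2 * 20 ^ (Fintype.card V) := by
  set n := Fintype.card V with hn
  have hdn : d ≤ n := by
    rw [← hs, hn, ← Finset.card_univ]
    exact Finset.card_le_card (Finset.subset_univ s)
  set U : Finset (V → Fin 20) :=
    univ.filter (fun f => 503*d < 10000 * (s.filter (fun u => f u = 0)).card) with hU
  set L : Finset (V → Fin 20) :=
    univ.filter (fun f => 10000 * (s.filter (fun u => f u = 0)).card < 497*d) with hL
  set c1 : ℝ := (100000088:ℝ)/10^8 with hc1
  have hc1pos : (0:ℝ) < c1 := by rw [hc1]; positivity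
  have e2' : (20:ℝ)^d * 20^(n-d) = (20:ℝ)^n := by
    rw [← pow_add]; congr 1; omega
  -- upper tail bound
  have hUbound : (U.card : ℝ) * c1 ^ d ≤ 20 ^ n := by
    set lam : ℝ := (10063:ℝ)/10^4 with hlam
    have hlam1 : (1:ℝ) ≤ lam := by rw [hlam]; norm_num
    set k : ℕ := 503*d/10000 with hk
    have htail := tail_upper s (k+1) lam hlam1 U (by
      intro f hf
      rw [hU, Finset.mem_filter] at hf
      have h2 := hf.2
      omega)
    rw [hs] at htail
    have hkey : ((19+lam)/20 * c1)^d ≤ lam^(k+1) := by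
      have h1 : (((19+lam)/20 * c1)^10000) ≤ lam^503 := by
        have hb : (19+lam)/20 = (200063:ℝ)/200000 := by rw [hlam]; norm_num
        rw [hb, hc1, hlam]
        exact R1
      have hbase : (((19+lam)/20 * c1)^d)^10000 ≤ (lam^(k+1))^10000 := by
        calc (((19+lam)/20 * c1)^d)^10000 = (((19+lam)/20*c1)^10000)^d := by
              rw [← pow_mul, ← pow_mul, Nat.mul_comm]
          _ ≤ (lam^503)^d := pow_le_pow_left₀ (by positivity) h1 d
          _ = lam^(503*d) := by rw [← pow_mul]
          _ ≤ lam^(10000*(k+1)) := pow_le_pow_right₀ hlam1 (by omega)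
          _ = (lam^(k+1))^10000 := by rw [← pow_mul, mul_comm 10000 (k+1)]
      exact le_of_pow_le_pow_left₀ (by norm_num) (by positivity) hbase
    have hlampos : (0:ℝ) < lam ^ (k+1) := by positivity
    have hbid : (19+lam)/20 * c1 * 20 = (19+lam) * c1 := by ring
    have hid : ((19+lam)/20*c1)^d * (20^d*20^(n-d)) = ((19+lam)^d * 20^(n-d)) * c1^d := by
      rw [← mul_assoc, ← mul_pow, hbid, mul_pow]
      ring
    have h20 : ((19+lam)^d * 20^(n-d)) * c1^d ≤ 20^n * lam^(k+1) := by
      rw [← hid]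
      calc ((19+lam)/20*c1)^d * (20^d*20^(n-d))
          ≤ lam^(k+1) * (20^d*20^(n-d)) := mul_le_mul_of_nonneg_right hkey (by positivity)
        _ = 20^n * lam^(k+1) := by rw [e2']; ring
    have hstep := mul_le_mul_of_nonneg_right htail (le_of_lt (pow_pos hc1pos d))
    have hfin : (U.card : ℝ) * c1^d * lam^(k+1) ≤ 20^n * lam^(k+1) := by
      calc (U.card : ℝ) * c1^d * lam^(k+1) = ((U.card : ℝ) * lam^(k+1)) * c1^d := by ring
        _ ≤ ((19+lam)^d * 20^(n-d)) * c1^d := hstep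
        _ ≤ 20^n * lam^(k+1) := h20
    exact le_of_mul_le_mul_right hfin hlampos
  -- lower tail bound
  have hLbound : (L.card : ℝ) * c1 ^ d ≤ 20 ^ n := by
    set lam : ℝ := (9937:ℝ)/10^4 with hlam
    have hlam0 : (0:ℝ) < lam := by rw [hlam]; norm_num
    have hlam1 : lam ≤ 1 := by rw [hlam]; norm_num
    set k : ℕ := 497*d/10000 with hk
    have htail := tail_lower s k lam hlam0 hlam1 L (by
      intro f hf
      rw [hL, Finset.mem_filter] at hf
      have h2 := hf.2
      omega)
    rw [hs] at htail
    have hkey : ((19+lam)/20 * c1)^d ≤ lam^k := by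
      have h1 : (((19+lam)/20 * c1)^10000) ≤ lam^497 := by
        have hb : (19+lam)/20 = (199937:ℝ)/200000 := by rw [hlam]; norm_num
        rw [hb, hc1, hlam]
        exact R2
      have hbase : (((19+lam)/20 * c1)^d)^10000 ≤ (lam^k)^10000 := by
        calc (((19+lam)/20 * c1)^d)^10000 = (((19+lam)/20*c1)^10000)^d := by
              rw [← pow_mul, ← pow_mul, Nat.mul_comm]
          _ ≤ (lam^497)^d := pow_le_pow_left₀ (by positivity) h1 d
          _ = lam^(497*d) := by rw [← pow_mul]
          _ ≤ lam^(10000*k) := pow_le_pow_of_le_one (le_of_lt hlam0) hlam1 (by omega)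
          _ = (lam^k)^10000 := by rw [← pow_mul, mul_comm 10000 k]
      exact le_of_pow_le_pow_left₀ (by norm_num) (by positivity) hbase
    have hlampos : (0:ℝ) < lam ^ k := by positivity
    have hbid : (19+lam)/20 * c1 * 20 = (19+lam) * c1 := by ring
    have hid : ((19+lam)/20*c1)^d * (20^d*20^(n-d)) = ((19+lam)^d * 20^(n-d)) * c1^d := by
      rw [← mul_assoc, ← mul_pow, hbid, mul_pow]
      ring
    have h20 : ((19+lam)^d * 20^(n-d)) * c1^d ≤ 20^n * lam^k := by
      rw [← hid]
      calc ((19+lam)/20*c1)^d * (20^d*20^(n-d))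
          ≤ lam^k * (20^d*20^(n-d)) := mul_le_mul_of_nonneg_right hkey (by positivity)
        _ = 20^n * lam^k := by rw [e2']; ring
    have hstep := mul_le_mul_of_nonneg_right htail (le_of_lt (pow_pos hc1pos d))
    have hfin : (L.card : ℝ) * c1^d * lam^k ≤ 20^n * lam^k := by
      calc (L.card : ℝ) * c1^d * lam^k = ((L.card : ℝ) * lam^k) * c1^d := by ring
        _ ≤ ((19+lam)^d * 20^(n-d)) * c1^d := hstep
        _ ≤ 20^n * lam^k := h20
    exact le_of_mul_le_mul_right hfin hlampos
  -- bad set contained in U ∪ L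
  have hsub : (univ.filter (fun f : V → Fin 20 =>
      ¬ |((s.filter (fun u => f u = 0)).card : ℝ) - 0.05 * d| ≤ 3 * 10 ^ (-4 : ℤ) * d)) ⊆ U ∪ L := by
    intro f hf
    rw [Finset.mem_filter] at hf
    rw [Finset.mem_union, hU, hL, Finset.mem_filter, Finset.mem_filter]
    by_contra hcon
    push_neg at hcon
    obtain ⟨h1, h2⟩ := hcon
    have h1' := h1 (Finset.mem_univ f)
    have h2' := h2 (Finset.mem_univ f)
    apply hf.2
    have hr1 : (10000:ℝ) * ((s.filter (fun u => f u = 0)).card : ℝ) ≤ 503 * d := by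
      exact_mod_cast h1'
    have hr2 : (497:ℝ) * d ≤ 10000 * ((s.filter (fun u => f u = 0)).card : ℝ) := by
      exact_mod_cast h2'
    have hz : (3:ℝ) * 10 ^ (-4 : ℤ) = 3/10^4 := by norm_num
    have h005 : (0.05:ℝ) = 1/20 := by norm_num
    rw [hz, h005, abs_le]
    constructor <;> nlinarith [hr1, hr2]
  calc ((univ.filter (fun f : V → Fin 20 =>
      ¬ |((s.filter (fun u => f u = 0)).card : ℝ) - 0.05 * d| ≤ 3 * 10 ^ (-4 : ℤ) * d)).card : ℝ)
      * c1^d ≤ (((U ∪ L).card : ℕ) : ℝ) * c1^d := by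
        apply mul_le_mul_of_nonneg_right _ (le_of_lt (pow_pos hc1pos d))
        exact_mod_cast Finset.card_le_card hsub
    _ ≤ ((U.card : ℝ) + L.card) * c1^d := by
        apply mul_le_mul_of_nonneg_right _ (le_of_lt (pow_pos hc1pos d))
        exact_mod_cast Finset.card_union_le U L
    _ = (U.card : ℝ) * c1^d + (L.card : ℝ) * c1^d := by ring
    _ ≤ 20^n + 20^n := add_le_add hUbound hLbound
    _ = 2 * 20^n := by ring

end Chernoff

/-- The exponential beats the polynomial: for `d ≥ 10^8`, `8 d^4 ≤ (1 + 88/10^8)^d`. -/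
lemma growth_bound (d : ℕ) (hd : 10^8 ≤ d) :
    (8:ℝ) * (d:ℝ)^4 * ((d:ℝ)^2+1)^0 ≤ ((100000088:ℝ)/10^8)^d := by
  have hdR : (10:ℝ)^8 ≤ (d:ℝ) := by exact_mod_cast hd
  -- binomial single term
  have hc : (100000088:ℝ)/10^8 = (88:ℝ)/10^8 + 1 := by norm_num
  have hbinom : ((88:ℝ)/10^8 + 1)^d = ∑ k ∈ Finset.range (d+1),
      ((88:ℝ)/10^8)^k * 1^(d-k) * (d.choose k) := add_pow _ _ _
  have hterm : ((88:ℝ)/10^8)^88 * 1^(d-88) * (d.choose 88) ≤ ((88:ℝ)/10^8 + 1)^d := by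
    rw [hbinom]
    apply Finset.single_le_sum (f := fun k => ((88:ℝ)/10^8)^k * 1^(d-k) * (d.choose k))
    · intro k _
      positivity
    · rw [Finset.mem_range]
      omega
  rw [one_pow, mul_one] at hterm
  rw [hc]
  -- lower bound the binomial coefficient
  have hnat : (d + 1 - 88)^88 ≤ Nat.factorial 88 * d.choose 88 := by
    calc (d + 1 - 88)^88 ≤ d.descFactorial 88 := Nat.pow_sub_le_descFactorial d 88
      _ = Nat.factorial 88 * d.choose 88 := Nat.descFactorial_eq_factorial_mul_choose d 88
  have hnat2 : 99999913 * d ≤ 10^8 * (d + 1 - 88) := by omega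
  have hR2 : (99999913:ℝ) * d ≤ 10^8 * ((d + 1 - 88 : ℕ) : ℝ) := by exact_mod_cast hnat2
  have hR1 : (((d + 1 - 88 : ℕ) : ℝ))^88 ≤ (Nat.factorial 88 : ℝ) * (d.choose 88) := by
    exact_mod_cast hnat
  have hF : ((Nat.factorial 88 : ℕ) : ℝ) = 185482642257398439114796845645546284380220968949399346684421580986889562184028199319100141244804501828416633516851200000000000000000000 := by
    norm_num [Nat.factorial]
  -- chain: (99999913*d)^88 ≤ (10^8)^88 * 88! * choose
  have hchain : ((99999913:ℝ) * d)^88 ≤ ((10:ℝ)^8)^88 * ((Nat.factorial 88 : ℝ) * (d.choose 88)) := by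
    calc ((99999913:ℝ) * d)^88 ≤ ((10:ℝ)^8 * ((d + 1 - 88 : ℕ) : ℝ))^88 := by
          apply pow_le_pow_left₀ (by positivity) hR2
      _ = ((10:ℝ)^8)^88 * (((d + 1 - 88 : ℕ) : ℝ))^88 := mul_pow _ _ _
      _ ≤ ((10:ℝ)^8)^88 * ((Nat.factorial 88 : ℝ) * (d.choose 88)) := by
          apply mul_le_mul_of_nonneg_left hR1 (by positivity)
  -- main explicit inequality
  have hmain : (8:ℝ) * (d:ℝ)^4 * (((10:ℝ)^8)^88 * ((10:ℝ)^8)^88 * (Nat.factorial 88 : ℝ))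
      ≤ (88:ℝ)^88 * ((99999913:ℝ) * d)^88 := by
    have hexp : ((99999913:ℝ) * d)^88 = (99999913:ℝ)^88 * ((d:ℝ)^84 * (d:ℝ)^4) := by
      rw [mul_pow]
      ring
    rw [hexp]
    have hd84 : ((10:ℝ)^8)^84 ≤ (d:ℝ)^84 := pow_le_pow_left₀ (by positivity) hdR 84
    have hconst : (8:ℝ) * (((10:ℝ)^8)^88 * ((10:ℝ)^8)^88 * (Nat.factorial 88 : ℝ))
        ≤ (88:ℝ)^88 * (99999913:ℝ)^88 * ((10:ℝ)^8)^84 := by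
      rw [hF]
      norm_num
    have hd4 : (0:ℝ) ≤ (d:ℝ)^4 := by positivity
    calc (8:ℝ) * (d:ℝ)^4 * (((10:ℝ)^8)^88 * ((10:ℝ)^8)^88 * (Nat.factorial 88 : ℝ))
        = ((8:ℝ) * (((10:ℝ)^8)^88 * ((10:ℝ)^8)^88 * (Nat.factorial 88 : ℝ))) * (d:ℝ)^4 := by ring
      _ ≤ ((88:ℝ)^88 * (99999913:ℝ)^88 * ((10:ℝ)^8)^84) * (d:ℝ)^4 :=
          mul_le_mul_of_nonneg_right hconst hd4
      _ ≤ ((88:ℝ)^88 * (99999913:ℝ)^88 * (d:ℝ)^84) * (d:ℝ)^4 := by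
          apply mul_le_mul_of_nonneg_right _ hd4
          apply mul_le_mul_of_nonneg_left hd84 (by positivity)
      _ = (88:ℝ)^88 * ((99999913:ℝ)^88 * ((d:ℝ)^84 * (d:ℝ)^4)) := by ring
  -- combine: 8 d^4 ≤ (88/10^8)^88 * choose ≤ (c+1)^d
  have hcpow : ((88:ℝ)/10^8)^88 = (88:ℝ)^88 / ((10:ℝ)^8)^88 := div_pow _ _ _
  have hpos1 : (0:ℝ) < ((10:ℝ)^8)^88 := by positivity
  have hpos2 : (0:ℝ) < (Nat.factorial 88 : ℝ) := by
    rw [hF]; norm_num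
  have hfinal : (8:ℝ) * (d:ℝ)^4 ≤ ((88:ℝ)/10^8)^88 * (d.choose 88) := by
    rw [hcpow, div_mul_eq_mul_div, le_div_iff₀ hpos1]
    -- 8 d^4 * (10^8)^88 ≤ 88^88 * choose
    have h := le_trans hmain (mul_le_mul_of_nonneg_left hchain (by positivity))
    -- h : 8*d^4*((10^8)^88*(10^8)^88*88!) ≤ 88^88 * ((10^8)^88 * (88! * choose))
    have hcancel : (8:ℝ) * (d:ℝ)^4 * ((10:ℝ)^8)^88 * ((((10:ℝ)^8)^88) * (Nat.factorial 88 : ℝ))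
        ≤ (88:ℝ)^88 * (d.choose 88) * ((((10:ℝ)^8)^88) * (Nat.factorial 88 : ℝ)) := by
      calc (8:ℝ) * (d:ℝ)^4 * ((10:ℝ)^8)^88 * ((((10:ℝ)^8)^88) * (Nat.factorial 88 : ℝ))
          = (8:ℝ) * (d:ℝ)^4 * (((10:ℝ)^8)^88 * ((10:ℝ)^8)^88 * (Nat.factorial 88 : ℝ)) := by ring
        _ ≤ (88:ℝ)^88 * (((10:ℝ)^8)^88 * ((Nat.factorial 88 : ℝ) * (d.choose 88))) := h
        _ = (88:ℝ)^88 * (d.choose 88) * ((((10:ℝ)^8)^88) * (Nat.factorial 88 : ℝ)) := by ring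
    exact le_of_mul_le_mul_right hcancel (by positivity)
  calc (8:ℝ) * (d:ℝ)^4 * ((d:ℝ)^2+1)^0 = (8:ℝ) * (d:ℝ)^4 := by ring
    _ ≤ ((88:ℝ)/10^8)^88 * (d.choose 88) := hfinal
    _ ≤ ((88:ℝ)/10^8 + 1)^d := hterm
section Main


theorem stmt_9 {V : Type*} [Fintype V] (G : SimpleGraph V) (d : ℕ) (hd : 10 ^ 8 ≤ d)
    (hreg : G.IsRegularOfDegree d) :
    ∃ V0 : Finset V, ∀ v : V,
      |((G.neighborFinset v ∩ V0).card : ℝ) - 0.05 * d| ≤ 3 * 10 ^ (-4 : ℤ) * d := by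
  set Bad : V → (V → Fin 20) → Prop := fun v f =>
    ¬ |(((G.neighborFinset v).filter (fun u => f u = 0)).card : ℝ) - 0.05 * d|
      ≤ 3 * 10 ^ (-4 : ℤ) * d with hBad
  set A : V → Finset (V → Fin 20) := fun v => univ.filter (Bad v) with hA
  set Γ : V → Finset V := fun v =>
    (G.neighborFinset v).biUnion (fun u => G.neighborFinset u) with hΓdef
  set c1 : ℝ := (100000088:ℝ)/10^8 with hc1
  have hc1pos : (0:ℝ) < c1 := by rw [hc1]; positivity
  have hc1dpos : (0:ℝ) < c1 ^ d := pow_pos hc1pos d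
  have hdR : (10:ℝ)^8 ≤ (d:ℝ) := by exact_mod_cast hd
  have hd2 : (1:ℝ) ≤ (d:ℝ)^2 := by nlinarith
  set q : ℝ := 1/((d:ℝ)^2+1) with hq
  set p : ℝ := 2 / c1^d with hp
  have hq0 : 0 < q := by rw [hq]; positivity
  have hq1 : q < 1 := by
    rw [hq, div_lt_one (by positivity)]
    nlinarith
  have hcardΩ : ((Fintype.card (V → Fin 20) : ℕ) : ℝ) = 20 ^ (Fintype.card V) := by
    rw [Fintype.card_fun]
    push_cast
    norm_num
  -- hypothesis hp of the LLL
  have hpA : ∀ v, ((A v).card : ℝ) ≤ p * (Fintype.card (V → Fin 20)) := by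
    intro v
    have hvb := vertex_bound (G.neighborFinset v) d
      (by rw [SimpleGraph.card_neighborFinset_eq_degree]; exact hreg v)
    rw [hcardΩ, hp]
    rw [div_mul_eq_mul_div, le_div_iff₀ hc1dpos]
    calc ((A v).card : ℝ) * c1^d = ((A v).card : ℝ) * ((100000088:ℝ)/10^8)^d := by rw [hc1]
      _ ≤ 2 * 20 ^ (Fintype.card V) := hvb
      _ = 2 * 20 ^ (Fintype.card V) := rfl
  -- hypothesis hpq
  have hgrowth := growth_bound d hd
  have hpq : p ≤ q * (1 - q)^(d*d) := by
    have hbern : 1 + ((d*d : ℕ) : ℝ) * (-q) ≤ (1 + (-q))^(d*d) :=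
      one_add_mul_le_pow (by nlinarith) (d*d)
    have hcast : ((d*d : ℕ) : ℝ) = (d:ℝ)^2 := by push_cast; ring
    have hval : 1 + ((d*d : ℕ) : ℝ) * (-q) = q := by
      rw [hcast, hq]
      field_simp
      ring
    have hbern' : q ≤ (1 - q)^(d*d) := by
      calc q = 1 + ((d*d : ℕ) : ℝ) * (-q) := hval.symm
        _ ≤ (1 + (-q))^(d*d) := hbern
        _ = (1 - q)^(d*d) := by ring_nf
    have hq2 : p ≤ q * q := by
      rw [hp, hq, div_le_iff₀ hc1dpos]
      have h8 : 2 * ((d:ℝ)^2+1)^2 ≤ 8 * (d:ℝ)^4 := by nlinarith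
      have : (8:ℝ) * (d:ℝ)^4 ≤ c1^d := by
        have := hgrowth
        rw [← hc1] at this
        calc (8:ℝ) * (d:ℝ)^4 = 8 * (d:ℝ)^4 * ((d:ℝ)^2+1)^0 := by ring
          _ ≤ c1^d := this
      have hfin : 2 * ((d:ℝ)^2+1)^2 ≤ c1^d := le_trans h8 this
      rw [div_mul_div_comm, one_mul]
      rw [div_mul_eq_mul_div, le_div_iff₀ (by positivity)]
      calc (2:ℝ) * (((d:ℝ)^2+1) * ((d:ℝ)^2+1)) = 2 * ((d:ℝ)^2+1)^2 := by ring
        _ ≤ c1^d := hfin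
        _ = 1 * c1^d := (one_mul _).symm
    calc p ≤ q * q := hq2
      _ ≤ q * (1-q)^(d*d) := mul_le_mul_of_nonneg_left hbern' (le_of_lt hq0)
  -- dependency degree
  have hΓcard : ∀ v, (Γ v).card ≤ d*d := by
    intro v
    rw [hΓdef]
    calc ((G.neighborFinset v).biUnion (fun u => G.neighborFinset u)).card
        ≤ ∑ u ∈ G.neighborFinset v, (G.neighborFinset u).card := Finset.card_biUnion_le
      _ = ∑ u ∈ G.neighborFinset v, d := Finset.sum_congr rfl (fun u _ => hreg u)
      _ = (G.neighborFinset v).card * d := by rw [Finset.sum_const, smul_eq_mul]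
      _ = d * d := by rw [SimpleGraph.card_neighborFinset_eq_degree, hreg v]
  -- dependence only on neighborhoods
  have hdep : ∀ v : V, ∀ f g : V → Fin 20,
      (∀ x ∈ G.neighborFinset v, f x = g x) → (Bad v f ↔ Bad v g) := by
    intro v f g hfg
    simp only [hBad]
    have : (G.neighborFinset v).filter (fun u => f u = 0)
        = (G.neighborFinset v).filter (fun u => g u = 0) := by
      apply Finset.filter_congr
      intro u hu
      rw [hfg u hu]
    rw [this]
  -- independence hypothesis
  have hind : ∀ v, ∀ S : Finset V, (∀ w ∈ S, w ∉ Γ v) →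
      (((interC (A v) (Blk A S)).card : ℝ)) * (Fintype.card (V → Fin 20))
        = (A v).card * (Blk A S).card := by
    intro v S hS
    have hdisj : ∀ w ∈ S, ∀ x ∈ G.neighborFinset w, x ∉ G.neighborFinset v := by
      intro w hw x hxw hxv
      apply hS w hw
      rw [hΓdef]
      apply Finset.mem_biUnion.mpr
      refine ⟨x, hxv, ?_⟩
      rw [SimpleGraph.mem_neighborFinset] at hxw ⊢
      exact hxw.symm
    have hcyl := cylinder_count' (G.neighborFinset v) (Bad v)
      (fun f => ∀ w ∈ S, ¬ Bad w f)
      (hdep v)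
      (by
        intro f g hfg
        constructor
        · intro h w hw
          rw [← hdep w f g (fun x hx => hfg x (hdisj w hw x hx))]
          exact h w hw
        · intro h w hw
          rw [hdep w f g (fun x hx => hfg x (hdisj w hw x hx))]
          exact h w hw)
      (interC (A v) (Blk A S)) (A v) (Blk A S)
      (by
        intro f
        rw [mem_interC]
        simp only [hA, Blk, Finset.mem_filter, Finset.mem_univ, true_and])
      (by
        intro f
        simp only [hA, Finset.mem_filter, Finset.mem_univ, true_and])
      (by
        intro f
        simp only [hA, Blk, Finset.mem_filter, Finset.mem_univ, true_and])
    exact_mod_cast hcyl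
  obtain ⟨f, hf⟩ := lll_counting A Γ (d*d) p q hq0 hq1 hpA hpq hΓcard hind
  refine ⟨univ.filter (fun u => f u = 0), ?_⟩
  intro v
  have hv := hf v
  rw [hA] at hv
  simp only [Finset.mem_filter, Finset.mem_univ, true_and] at hv
  simp only [hBad] at hv
  rw [not_not] at hv
  have : G.neighborFinset v ∩ univ.filter (fun u => f u = 0)
      = (G.neighborFinset v).filter (fun u => f u = 0) := by
    ext u
    simp
  rw [this]
  exact hv

end Main
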